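/- Let $C_*$ be a chain complex of finite-dimensional real vector spaces, vanishing above degree $N$, equipped with two inner products $\iota_1$ and $\iota_2$ such that $\langle u, w \rangle_2 = c_n \langle u, w \rangle_1$ for all $u, w \in C_n$, where $c_n > 0$. Then the analytic torsions satisfy $T(C_*, \iota_2) = T(C_*, \iota_1) \prod_{n=0}^N c_n^{\frac{(-1)^n}{2}(\dim C_n - \dim H_n(C_*))}$. -/

import Mathlib

open LinearMap Module

/-- The Hodge-Laplace operator `Δₙ = ∂ₙ* ∂ₙ + ∂ₙ₊₁ ∂ₙ₊₁*`. -/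
noncomputable def hodgeLaplace (C : ℕ → Type) [∀ n, NormedAddCommGroup (C n)]
    [∀ n, InnerProductSpace ℝ (C n)] [∀ n, FiniteDimensional ℝ (C n)]
    (d : ∀ n, C n →ₗ[ℝ] C (n - 1)) (n : ℕ) : C n →ₗ[ℝ] C n :=
  (adjoint (d n)).comp (d n) +
    (show C n →ₗ[ℝ] C n from (d (n + 1)).comp (adjoint (d (n + 1))))

/-- The product of the positive eigenvalues (with multiplicity) of a
self-adjoint positive semi-definite operator `T`, computed as
`det(T + P_{ker T})` where `P_{ker T}` is the orthogonal projection onto the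
kernel; this is the regularized determinant `exp(-ζ_T'(0))`. -/
noncomputable def detPos {E : Type} [NormedAddCommGroup E]
    [InnerProductSpace ℝ E] [FiniteDimensional ℝ E] (T : E →ₗ[ℝ] E) : ℝ :=
  LinearMap.det (T + ((LinearMap.ker T).subtypeL.comp
    (Submodule.orthogonalProjectionOnto (LinearMap.ker T))).toLinearMap)

/-- The analytic torsion of a chain complex of finite-dimensional real inner
product spaces vanishing above degree `N`:
`log T = (1/2) ∑ (-1)^n n ζₙ'(0) = -(1/2) ∑ (-1)^n n ∑_{λ>0} log λ`, i.e.
`T = ∏ₙ (det'Δₙ)^{(-1)^{n+1} n / 2}`. -/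
noncomputable def torsion (C : ℕ → Type) [∀ n, NormedAddCommGroup (C n)]
    [∀ n, InnerProductSpace ℝ (C n)] [∀ n, FiniteDimensional ℝ (C n)]
    (d : ∀ n, C n →ₗ[ℝ] C (n - 1)) (N : ℕ) : ℝ :=
  ∏ n ∈ Finset.range (N + 1),
    detPos (hodgeLaplace C d n) ^ (((-1 : ℝ) ^ (n + 1) * n) / 2)

open scoped RealInnerProductSpace
set_option linter.unusedSectionVars false
section helpers

variable {E F G E' F' : Type} [NormedAddCommGroup E] [InnerProductSpace ℝ E] [FiniteDimensional ℝ E]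
  [NormedAddCommGroup F] [InnerProductSpace ℝ F] [FiniteDimensional ℝ F]
  [NormedAddCommGroup G] [InnerProductSpace ℝ G] [FiniteDimensional ℝ G]
  [NormedAddCommGroup E'] [InnerProductSpace ℝ E'] [FiniteDimensional ℝ E']
  [NormedAddCommGroup F'] [InnerProductSpace ℝ F'] [FiniteDimensional ℝ F']

/-- projection onto the kernel, as an endomorphism -/
noncomputable def kproj (T : E →ₗ[ℝ] E) : E →ₗ[ℝ] E :=
  ((LinearMap.ker T).subtypeL.comp (Submodule.orthogonalProjectionOnto (LinearMap.ker T))).toLinearMap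

lemma detPos_def (T : E →ₗ[ℝ] E) : detPos T = LinearMap.det (T + kproj T) := rfl

lemma kproj_apply (T : E →ₗ[ℝ] E) (x : E) :
    kproj T x = (Submodule.orthogonalProjectionOnto (LinearMap.ker T) x : E) := rfl

lemma kproj_mem (T : E →ₗ[ℝ] E) (x : E) : kproj T x ∈ LinearMap.ker T :=
  (Submodule.orthogonalProjectionOnto (LinearMap.ker T) x).2

lemma kproj_eq_self (T : E →ₗ[ℝ] E) {x : E} (hx : x ∈ LinearMap.ker T) : kproj T x = x := by
  rw [kproj_apply]
  exact Submodule.starProjection_eq_self_iff.2 hx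

lemma kproj_eq_zero (T : E →ₗ[ℝ] E) {x : E} (hx : x ∈ (LinearMap.ker T)ᗮ) : kproj T x = 0 := by
  rw [kproj_apply, Submodule.orthogonalProjectionOnto_apply_of_mem_orthogonal hx]
  rfl

lemma det_eq_prod_of_eigen {m : ℕ} (b : OrthonormalBasis (Fin m) ℝ E) (T : E →ₗ[ℝ] E)
    (μ : Fin m → ℝ) (h : ∀ i, T (b i) = μ i • b i) :
    LinearMap.det T = ∏ i, μ i := by
  classical
  rw [← LinearMap.det_toMatrix b.toBasis]
  have : (LinearMap.toMatrix b.toBasis b.toBasis) T = Matrix.diagonal μ := by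
    ext i j
    rw [LinearMap.toMatrix_apply, OrthonormalBasis.coe_toBasis, h j, map_smul]
    simp [Basis.repr_self, Matrix.diagonal_apply, Finsupp.single_apply]
    aesop
  rw [this, Matrix.det_diagonal]

end helpers
set_option linter.unusedSectionVars false

section spectral

variable {E : Type} [NormedAddCommGroup E] [InnerProductSpace ℝ E] [FiniteDimensional ℝ E]
  {T : E →ₗ[ℝ] E}

lemma kproj_congr {S T : E →ₗ[ℝ] E} (h : LinearMap.ker S = LinearMap.ker T) :
    kproj S = kproj T := by
  ext x
  rw [kproj_apply, kproj_apply]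
  refine Submodule.eq_starProjection_of_mem_orthogonal ?_ ?_
  · exact h.symm ▸ (Submodule.orthogonalProjectionOnto (LinearMap.ker T) x).2
  · exact h.symm ▸ Submodule.sub_starProjection_mem_orthogonal x

lemma mem_orthogonal_ker_of_eigen (hT : T.IsSymmetric) {v : E} {μ : ℝ} (hμ : μ ≠ 0)
    (hv : T v = μ • v) : v ∈ (LinearMap.ker T)ᗮ := by
  intro y hy
  have h1 : ⟪y, T v⟫ = 0 := by
    rw [← hT y v, LinearMap.mem_ker.1 hy, inner_zero_left]
  rw [hv, real_inner_smul_right] at h1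
  exact (mul_eq_zero.1 h1).resolve_left hμ

lemma kproj_eigen (hT : T.IsSymmetric) {v : E} {μ : ℝ} (hv : T v = μ • v) :
    kproj T v = (if μ = 0 then (1:ℝ) else 0) • v := by
  by_cases h : μ = 0
  · rw [if_pos h, one_smul]
    exact kproj_eq_self T (LinearMap.mem_ker.2 (by rw [hv, h, zero_smul]))
  · rw [if_neg h, zero_smul]
    exact kproj_eq_zero T (mem_orthogonal_ker_of_eigen hT h hv)

lemma eigen_spec (hT : T.IsSymmetric) (i : Fin (Module.finrank ℝ E)) :
    T (hT.eigenvectorBasis rfl i) = hT.eigenvalues rfl i • hT.eigenvectorBasis rfl i := by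
  simpa using hT.apply_eigenvectorBasis rfl i

lemma detPos_eq_prod (hT : T.IsSymmetric) :
    detPos T = ∏ i, (hT.eigenvalues rfl i + if hT.eigenvalues rfl i = 0 then 1 else 0) := by
  rw [detPos_def]
  apply det_eq_prod_of_eigen (hT.eigenvectorBasis rfl)
  intro i
  rw [LinearMap.add_apply, eigen_spec hT i, kproj_eigen hT (eigen_spec hT i), add_smul]

lemma detPos_pos (hT : T.IsSymmetric) (h : ∀ x, 0 ≤ ⟪T x, x⟫) : 0 < detPos T := by
  rw [detPos_eq_prod hT]
  apply Finset.prod_pos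
  intro i _
  have hb : ⟪hT.eigenvectorBasis rfl i, hT.eigenvectorBasis rfl i⟫ = 1 := by
    rw [real_inner_self_eq_norm_mul_norm, (hT.eigenvectorBasis rfl).orthonormal.1 i, one_mul]
  have h0 : 0 ≤ hT.eigenvalues rfl i := by
    have := h (hT.eigenvectorBasis rfl i)
    rwa [eigen_spec hT i, real_inner_smul_left, hb, mul_one] at this
  by_cases hz : hT.eigenvalues rfl i = 0
  · simp [hz]
  · simp only [if_neg hz, add_zero]
    exact lt_of_le_of_ne h0 (Ne.symm hz)

lemma finrank_ker_eq_card (hT : T.IsSymmetric) :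
    Module.finrank ℝ (LinearMap.ker T)
      = (Finset.univ.filter fun i => hT.eigenvalues rfl i = 0).card := by
  classical
  set b := hT.eigenvectorBasis rfl with hbdef
  set μ := hT.eigenvalues rfl with hmudef
  have hb : ∀ i, T (b i) = μ i • b i := eigen_spec hT
  have hspan : LinearMap.ker T
      = Submodule.span ℝ (Set.range ((b : Fin (Module.finrank ℝ E) → E) ∘
          (Subtype.val : {i // μ i = 0} → _))) := by
    apply le_antisymm
    · intro x hx
      have hx' : ∀ i, ¬ μ i = 0 → ⟪b i, x⟫ = 0 := by
        intro i hi
        have h2 : μ i * ⟪b i, x⟫ = ⟪T (b i), x⟫ := by rw [hb i, real_inner_smul_left]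
        rw [hT (b i) x, LinearMap.mem_ker.1 hx, inner_zero_right] at h2
        exact (mul_eq_zero.1 h2).resolve_left hi
      rw [← b.sum_repr x]
      apply Submodule.sum_mem
      intro i _
      by_cases hi : μ i = 0
      · exact Submodule.smul_mem _ _ (Submodule.subset_span ⟨⟨i, hi⟩, rfl⟩)
      · rw [b.repr_apply_apply, hx' i hi, zero_smul]
        exact Submodule.zero_mem _
    · rw [Submodule.span_le]
      rintro _ ⟨⟨i, hi⟩, rfl⟩
      exact LinearMap.mem_ker.2 (by rw [Function.comp_apply, hb i, hi, zero_smul])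
  rw [hspan, finrank_span_eq_card (b.orthonormal.linearIndependent.comp
    (Subtype.val : {i // μ i = 0} → _) Subtype.val_injective)]
  simp [Fintype.card_subtype]

lemma finrank_range_eq_card (hT : T.IsSymmetric) :
    Module.finrank ℝ (LinearMap.range T)
      = (Finset.univ.filter fun i => ¬ hT.eigenvalues rfl i = 0).card := by
  classical
  have h1 := LinearMap.finrank_range_add_finrank_ker T
  have h2 := finrank_ker_eq_card hT
  have h3 := Finset.card_filter_add_card_filter_not
    (s := (Finset.univ : Finset (Fin (Module.finrank ℝ E))))
    (p := fun i => hT.eigenvalues rfl i = 0)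
  simp only [Finset.card_univ, Fintype.card_fin] at h3
  omega

lemma detPos_smul (hT : T.IsSymmetric) {γ : ℝ} (hγ : γ ≠ 0) :
    detPos (γ • T) = γ ^ (Module.finrank ℝ (LinearMap.range T)) * detPos T := by
  classical
  set b := hT.eigenvectorBasis rfl with hbdef
  set μ := hT.eigenvalues rfl with hmudef
  have hb : ∀ i, T (b i) = μ i • b i := eigen_spec hT
  have hker : kproj (γ • T) = kproj T :=
    kproj_congr (LinearMap.ker_smul T γ hγ)
  have h1 : detPos (γ • T) = ∏ i, (γ * μ i + if μ i = 0 then 1 else 0) := by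
    rw [detPos_def, hker]
    apply det_eq_prod_of_eigen b
    intro i
    rw [LinearMap.add_apply, LinearMap.smul_apply, hb i, kproj_eigen hT (hb i),
      smul_smul, add_smul]
  rw [h1, detPos_eq_prod hT, finrank_range_eq_card hT]
  calc ∏ i, (γ * μ i + if μ i = 0 then 1 else 0)
      = ∏ i, ((if μ i = 0 then 1 else γ) * (μ i + if μ i = 0 then 1 else 0)) := by
        refine Finset.prod_congr rfl fun i _ => ?_
        by_cases h : μ i = 0 <;> simp [h]
    _ = (∏ i, (if μ i = 0 then 1 else γ)) *
          ∏ i, (μ i + if μ i = 0 then 1 else 0) := Finset.prod_mul_distrib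
    _ = γ ^ (Finset.univ.filter fun i => ¬ μ i = 0).card *
          ∏ i, (μ i + if μ i = 0 then 1 else 0) := by
        rw [Finset.prod_ite, Finset.prod_const, Finset.prod_const, one_pow, one_mul]

end spectral
section conj

variable {E F G E' F' : Type}
  [NormedAddCommGroup E] [InnerProductSpace ℝ E] [FiniteDimensional ℝ E]
  [NormedAddCommGroup F] [InnerProductSpace ℝ F] [FiniteDimensional ℝ F]
  [NormedAddCommGroup G] [InnerProductSpace ℝ G] [FiniteDimensional ℝ G]
  [NormedAddCommGroup E'] [InnerProductSpace ℝ E'] [FiniteDimensional ℝ E']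
  [NormedAddCommGroup F'] [InnerProductSpace ℝ F'] [FiniteDimensional ℝ F']

lemma detPos_conj (φ : E ≃ₗ[ℝ] E') {a : ℝ} (ha : a ≠ 0)
    (hφ : ∀ u w : E, ⟪φ u, φ w⟫ = a * ⟪u, w⟫) (T : E →ₗ[ℝ] E) :
    detPos (φ.toLinearMap ∘ₗ T ∘ₗ φ.symm.toLinearMap) = detPos T := by
  set S := φ.toLinearMap ∘ₗ T ∘ₗ φ.symm.toLinearMap with hS
  have hker : ∀ x : E', x ∈ LinearMap.ker S ↔ φ.symm x ∈ LinearMap.ker T := by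
    intro x
    simp [hS, LinearMap.mem_ker]
  have hproj : kproj S = φ.toLinearMap ∘ₗ kproj T ∘ₗ φ.symm.toLinearMap := by
    ext x
    simp only [LinearMap.coe_comp, Function.comp_apply, LinearEquiv.coe_coe]
    rw [kproj_apply, kproj_apply]
    apply Submodule.eq_starProjection_of_mem_of_inner_eq_zero
    · refine (hker _).2 ?_
      have := (Submodule.orthogonalProjectionOnto (LinearMap.ker T) (φ.symm x)).2
      simpa using this
    · intro w hw
      have hw' : φ.symm w ∈ LinearMap.ker T := (hker w).1 hw
      have h1 : x - φ ((Submodule.orthogonalProjectionOnto (LinearMap.ker T) (φ.symm x) : E))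
          = φ (φ.symm x - (Submodule.orthogonalProjectionOnto (LinearMap.ker T) (φ.symm x) : E)) := by
        rw [map_sub, φ.apply_symm_apply]
      have h2 : w = φ (φ.symm w) := (φ.apply_symm_apply w).symm
      rw [h1, h2, hφ]
      have h3 : φ.symm x - (Submodule.orthogonalProjectionOnto (LinearMap.ker T) (φ.symm x) : E)
          ∈ (LinearMap.ker T)ᗮ := Submodule.sub_starProjection_mem_orthogonal
        (K := LinearMap.ker T) (φ.symm x)
      rw [real_inner_comm, h3 _ hw', mul_zero]
  have hsum : S + kproj S = φ.toLinearMap ∘ₗ (T + kproj T) ∘ₗ φ.symm.toLinearMap := by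
    rw [hproj, hS]
    ext x
    simp
  rw [detPos_def, detPos_def, hsum, LinearMap.det_conj]

lemma adjoint_conj (f : E →ₗ[ℝ] F) (φE : E ≃ₗ[ℝ] E') (φF : F ≃ₗ[ℝ] F') {a b : ℝ}
    (ha : a ≠ 0) (hφE : ∀ u w : E, ⟪φE u, φE w⟫ = a * ⟪u, w⟫)
    (hφF : ∀ u w : F, ⟪φF u, φF w⟫ = b * ⟪u, w⟫) :
    LinearMap.adjoint (φF.toLinearMap ∘ₗ f ∘ₗ φE.symm.toLinearMap)
      = (b / a) • (φE.toLinearMap ∘ₗ (LinearMap.adjoint f) ∘ₗ φF.symm.toLinearMap) := by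
  symm
  rw [LinearMap.eq_adjoint_iff]
  intro x y
  simp only [LinearMap.smul_apply, LinearMap.coe_comp, Function.comp_apply,
    LinearEquiv.coe_coe]
  rw [real_inner_smul_left]
  conv_lhs => rw [show y = φE (φE.symm y) from (φE.apply_symm_apply y).symm]
  rw [hφE, LinearMap.adjoint_inner_left]
  conv_rhs => rw [show x = φF (φF.symm x) from (φF.apply_symm_apply x).symm]
  rw [hφF]
  field_simp

lemma orthogonal_ker {S : E →ₗ[ℝ] E} (hS : S.IsSymmetric) :
    (LinearMap.ker S)ᗮ = LinearMap.range S := by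
  have h1 : LinearMap.ker S = (LinearMap.range S)ᗮ := by
    apply le_antisymm
    · intro x hx
      rw [Submodule.mem_orthogonal]
      rintro _ ⟨y, rfl⟩
      rw [hS y x, LinearMap.mem_ker.1 hx, inner_zero_right]
    · intro x hx
      have : ⟪S x, S x⟫ = 0 := by
        rw [hS x (S x), real_inner_comm]
        exact (Submodule.mem_orthogonal _ _).1 hx _ ⟨S x, rfl⟩
      exact LinearMap.mem_ker.2 (inner_self_eq_zero.1 this)
  rw [h1, Submodule.orthogonal_orthogonal]

lemma isSymmetric_adjoint_comp (f : E →ₗ[ℝ] F) :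
    (LinearMap.adjoint f ∘ₗ f).IsSymmetric := by
  intro x y
  simp only [LinearMap.coe_comp, Function.comp_apply]
  rw [LinearMap.adjoint_inner_left, LinearMap.adjoint_inner_right]

lemma isSymmetric_comp_adjoint (g : G →ₗ[ℝ] E) :
    (g ∘ₗ LinearMap.adjoint g).IsSymmetric := by
  intro x y
  simp only [LinearMap.coe_comp, Function.comp_apply]
  rw [← LinearMap.adjoint_inner_right g, ← LinearMap.adjoint_inner_left g]

lemma inner_adjoint_comp_self (f : E →ₗ[ℝ] F) (x : E) :
    ⟪(LinearMap.adjoint f ∘ₗ f) x, x⟫ = ⟪f x, f x⟫ := by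
  simp only [LinearMap.coe_comp, Function.comp_apply]
  rw [LinearMap.adjoint_inner_left]

lemma inner_comp_adjoint_self (g : G →ₗ[ℝ] E) (x : E) :
    ⟪(g ∘ₗ LinearMap.adjoint g) x, x⟫
      = ⟪LinearMap.adjoint g x, LinearMap.adjoint g x⟫ := by
  simp only [LinearMap.coe_comp, Function.comp_apply]
  rw [← LinearMap.adjoint_inner_right g]

lemma ker_adjoint_comp_self (f : E →ₗ[ℝ] F) :
    LinearMap.ker (LinearMap.adjoint f ∘ₗ f) = LinearMap.ker f := by
  apply le_antisymm
  · intro x hx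
    have : ⟪f x, f x⟫ = 0 := by
      rw [← inner_adjoint_comp_self f x, LinearMap.mem_ker.1 hx, inner_zero_left]
    exact LinearMap.mem_ker.2 (inner_self_eq_zero.1 this)
  · intro x hx
    refine LinearMap.mem_ker.2 ?_
    simp only [LinearMap.coe_comp, Function.comp_apply, LinearMap.mem_ker.1 hx, map_zero]

lemma ker_adjoint (g : G →ₗ[ℝ] E) :
    LinearMap.ker (LinearMap.adjoint g) = (LinearMap.range g)ᗮ := by
  ext x
  rw [LinearMap.mem_ker, Submodule.mem_orthogonal]
  constructor
  · rintro h _ ⟨y, rfl⟩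
    rw [← LinearMap.adjoint_inner_right g, h, inner_zero_right]
  · intro h
    have : ⟪LinearMap.adjoint g x, LinearMap.adjoint g x⟫ = 0 := by
      rw [LinearMap.adjoint_inner_left, real_inner_comm]
      exact h _ ⟨LinearMap.adjoint g x, rfl⟩
    exact inner_self_eq_zero.1 this

lemma finrank_range_adjoint_comp (f : E →ₗ[ℝ] F) :
    Module.finrank ℝ (LinearMap.range (LinearMap.adjoint f ∘ₗ f))
      = Module.finrank ℝ (LinearMap.range f) := by
  have h1 := LinearMap.finrank_range_add_finrank_ker (LinearMap.adjoint f ∘ₗ f)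
  have h2 := LinearMap.finrank_range_add_finrank_ker f
  rw [_root_.ker_adjoint_comp_self] at h1
  omega

lemma finrank_range_comp_adjoint (g : G →ₗ[ℝ] E) :
    Module.finrank ℝ (LinearMap.range (g ∘ₗ LinearMap.adjoint g))
      = Module.finrank ℝ (LinearMap.range g) := by
  have hker : LinearMap.ker (g ∘ₗ LinearMap.adjoint g)
      = LinearMap.ker (LinearMap.adjoint g) := by
    apply le_antisymm
    · intro x hx
      have : ⟪LinearMap.adjoint g x, LinearMap.adjoint g x⟫ = 0 := by
        rw [← inner_comp_adjoint_self g x, LinearMap.mem_ker.1 hx, inner_zero_left]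
      exact LinearMap.mem_ker.2 (inner_self_eq_zero.1 this)
    · intro x hx
      refine LinearMap.mem_ker.2 ?_
      simp only [LinearMap.coe_comp, Function.comp_apply, LinearMap.mem_ker.1 hx, map_zero]
  have h1 := LinearMap.finrank_range_add_finrank_ker (g ∘ₗ LinearMap.adjoint g)
  have h2 := LinearMap.finrank_range_add_finrank_ker (LinearMap.adjoint g)
  have h3 := Submodule.finrank_add_finrank_orthogonal (K := LinearMap.range g)
  rw [hker] at h1
  rw [ker_adjoint] at h1 h2
  omega

end conj
section split

variable {E F G : Type}
  [NormedAddCommGroup E] [InnerProductSpace ℝ E] [FiniteDimensional ℝ E]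
  [NormedAddCommGroup F] [InnerProductSpace ℝ F] [FiniteDimensional ℝ F]
  [NormedAddCommGroup G] [InnerProductSpace ℝ G] [FiniteDimensional ℝ G]

lemma detPos_split (f : E →ₗ[ℝ] F) (g : G →ₗ[ℝ] E) (hfg : f ∘ₗ g = 0) :
    detPos (LinearMap.adjoint f ∘ₗ f + g ∘ₗ LinearMap.adjoint g)
      = detPos (LinearMap.adjoint f ∘ₗ f) * detPos (g ∘ₗ LinearMap.adjoint g) := by
  classical
  set A := LinearMap.adjoint f ∘ₗ f with hA
  set B := g ∘ₗ LinearMap.adjoint g with hB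
  have hrBkA : ∀ x : E, B x ∈ LinearMap.ker A := by
    intro x
    have h0 : f (g (LinearMap.adjoint g x)) = 0 := by
      have := congrArg (fun h : G →ₗ[ℝ] F => h (LinearMap.adjoint g x)) hfg
      simpa using this
    simp only [LinearMap.mem_ker, hA, hB, LinearMap.coe_comp, Function.comp_apply, h0, map_zero]
  have hrAkB : ∀ x : E, A x ∈ LinearMap.ker B := by
    intro x
    have h0 : LinearMap.adjoint g (LinearMap.adjoint f (f x)) = 0 := by
      have : LinearMap.adjoint g ∘ₗ LinearMap.adjoint f = 0 := by
        rw [← LinearMap.adjoint_comp, hfg, map_zero]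
      have := congrArg (fun h : F →ₗ[ℝ] G => h (f x)) this
      simpa using this
    simp only [LinearMap.mem_ker, hA, hB, LinearMap.coe_comp, Function.comp_apply, h0, map_zero]
  have hsymA : A.IsSymmetric := isSymmetric_adjoint_comp f
  have hsymB : B.IsSymmetric := isSymmetric_comp_adjoint g
  have horthB : (LinearMap.ker B)ᗮ ≤ LinearMap.ker A := by
    rw [orthogonal_ker hsymB]
    rintro _ ⟨y, rfl⟩
    exact hrBkA y
  have horthA : (LinearMap.ker A)ᗮ ≤ LinearMap.ker B := by
    rw [orthogonal_ker hsymA]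
    rintro _ ⟨y, rfl⟩
    exact hrAkB y
  have hkerSum : LinearMap.ker (A + B) = LinearMap.ker A ⊓ LinearMap.ker B := by
    apply le_antisymm
    · intro x hx
      have hx0 : A x + B x = 0 := hx
      have h1 : ⟪A x, x⟫ + ⟪B x, x⟫ = 0 := by
        rw [← inner_add_left, hx0, inner_zero_left]
      have h2 : ⟪f x, f x⟫ + ⟪LinearMap.adjoint g x, LinearMap.adjoint g x⟫ = 0 := by
        rw [← inner_adjoint_comp_self f x, ← inner_comp_adjoint_self g x]
        exact h1
      have h3 : ⟪f x, f x⟫ = 0 ∧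
          ⟪LinearMap.adjoint g x, LinearMap.adjoint g x⟫ = 0 :=
        (add_eq_zero_iff_of_nonneg real_inner_self_nonneg real_inner_self_nonneg).1 h2
      constructor
      · show x ∈ LinearMap.ker A
        simp only [LinearMap.mem_ker, hA, LinearMap.coe_comp, Function.comp_apply,
          inner_self_eq_zero.1 h3.1, map_zero]
      · show x ∈ LinearMap.ker B
        simp only [LinearMap.mem_ker, hB, LinearMap.coe_comp, Function.comp_apply,
          inner_self_eq_zero.1 h3.2, map_zero]
    · intro x hx
      have h1 : A x = 0 := LinearMap.mem_ker.1 hx.1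
      have h2 : B x = 0 := LinearMap.mem_ker.1 hx.2
      show A x + B x = 0
      rw [h1, h2, add_zero]
  have hKK : ∀ x : E, kproj (A + B) x = kproj A (kproj B x) := by
    intro x
    rw [kproj_apply (A + B)]
    apply Submodule.eq_starProjection_of_mem_of_inner_eq_zero
    · rw [hkerSum]
      refine Submodule.mem_inf.2 ⟨kproj_mem A _, ?_⟩
      have hd : kproj B x - kproj A (kproj B x) ∈ LinearMap.ker B :=
        horthA (Submodule.sub_starProjection_mem_orthogonal (K := LinearMap.ker A) (kproj B x))
      have : kproj A (kproj B x) = kproj B x - (kproj B x - kproj A (kproj B x)) := by abel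
      rw [this]
      exact Submodule.sub_mem _ (kproj_mem B x) hd
    · intro w hw
      rw [hkerSum, Submodule.mem_inf] at hw
      have hsplit : x - kproj A (kproj B x)
          = (x - kproj B x) + (kproj B x - kproj A (kproj B x)) := by abel
      rw [hsplit, inner_add_left]
      have e1 : ⟪x - kproj B x, w⟫ = 0 := by
        rw [real_inner_comm]
        exact Submodule.sub_starProjection_mem_orthogonal (K := LinearMap.ker B) x _ hw.2
      have e2 : ⟪kproj B x - kproj A (kproj B x), w⟫ = 0 := by
        rw [real_inner_comm]
        exact Submodule.sub_starProjection_mem_orthogonal (K := LinearMap.ker A) (kproj B x) _ hw.1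
      rw [e1, e2, add_zero]
  have hmain : (A + B) + kproj (A + B) = (A + kproj A) ∘ₗ (B + kproj B) := by
    ext x
    simp only [LinearMap.add_apply, LinearMap.coe_comp, Function.comp_apply, map_add]
    have e1 : A (B x) = 0 := LinearMap.mem_ker.1 (hrBkA x)
    have e2 : A (kproj B x) = A x := by
      have hd : x - kproj B x ∈ LinearMap.ker A :=
        horthB (Submodule.sub_starProjection_mem_orthogonal (K := LinearMap.ker B) x)
      have h5 := LinearMap.mem_ker.1 hd
      rw [map_sub, sub_eq_zero] at h5
      exact h5.symm
    have e3 : kproj A (B x) = B x := kproj_eq_self A (hrBkA x)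
    have e4 : kproj A (kproj B x) = kproj (A + B) x := (hKK x).symm
    rw [e1, e2, e3, e4]
    abel
  rw [detPos_def, detPos_def, detPos_def, hmain, LinearMap.det_comp]

end split
lemma sum_telescope (r L : ℕ → ℝ) (hr0 : r 0 = 0) (N : ℕ) :
    ∑ n ∈ Finset.range (N+1), ((-1:ℝ) ^ (n+1) * n / 2) *
        (r n * (L (n-1) - L n) + r (n+1) * (L n - L (n+1)))
      = (∑ n ∈ Finset.range (N+1), (-1:ℝ) ^ n / 2 * (r n + r (n+1)) * L n)
        - r (N+1) * ((-1:ℝ)^(N+2) * (N+1) / 2 * L N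
            + (-1:ℝ)^(N+1) * N / 2 * L (N+1)) := by
  induction N with
  | zero => simp [hr0]; ring
  | succ N ih =>
      rw [Finset.sum_range_succ, ih]
      conv_rhs => rw [Finset.sum_range_succ]
      have hsub : N + 1 - 1 = N := rfl
      rw [hsub]
      push_cast
      rw [pow_succ ((-1:ℝ)) (N+2), pow_succ ((-1:ℝ)) (N+1), pow_succ ((-1:ℝ)) N]
      ring
section extra

variable {E F G : Type}
  [NormedAddCommGroup E] [InnerProductSpace ℝ E] [FiniteDimensional ℝ E]
  [NormedAddCommGroup F] [InnerProductSpace ℝ F] [FiniteDimensional ℝ F]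
  [NormedAddCommGroup G] [InnerProductSpace ℝ G] [FiniteDimensional ℝ G]

lemma adjoint_smul' (f : E →ₗ[ℝ] F) (a : ℝ) :
    LinearMap.adjoint (a • f) = a • LinearMap.adjoint f := by
  symm
  rw [LinearMap.eq_adjoint_iff]
  intro x y
  simp only [LinearMap.smul_apply]
  rw [real_inner_smul_left, LinearMap.adjoint_inner_left, real_inner_smul_right]

lemma smul_adjoint_comp_self (f : E →ₗ[ℝ] F) {a : ℝ} (ha : 0 ≤ a) :
    a • (LinearMap.adjoint f ∘ₗ f)
      = LinearMap.adjoint (Real.sqrt a • f) ∘ₗ (Real.sqrt a • f) := by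
  rw [adjoint_smul', LinearMap.smul_comp, LinearMap.comp_smul, smul_smul,
    Real.mul_self_sqrt ha]

lemma smul_comp_adjoint_self (g : G →ₗ[ℝ] E) {a : ℝ} (ha : 0 ≤ a) :
    a • (g ∘ₗ LinearMap.adjoint g)
      = (Real.sqrt a • g) ∘ₗ LinearMap.adjoint (Real.sqrt a • g) := by
  rw [adjoint_smul', LinearMap.smul_comp, LinearMap.comp_smul, smul_smul,
    Real.mul_self_sqrt ha]

lemma detPos_hodge_pos (f : E →ₗ[ℝ] F) (g : G →ₗ[ℝ] E) :
    0 < detPos (LinearMap.adjoint f ∘ₗ f + g ∘ₗ LinearMap.adjoint g) := by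
  apply detPos_pos ((isSymmetric_adjoint_comp f).add (isSymmetric_comp_adjoint g))
  intro x
  rw [LinearMap.add_apply, inner_add_left, inner_adjoint_comp_self,
    inner_comp_adjoint_self]
  exact add_nonneg real_inner_self_nonneg real_inner_self_nonneg

end extra
open scoped RealInnerProductSpace

set_option maxHeartbeats 4000000 in
/-- if the inner products of two chain complexes are related by
`⟨u,w⟩₂ = cₙ ⟨u,w⟩₁` (via a chain isomorphism `φ` identifying the underlying
complexes), then the analytic torsions are related by
`T₂ = T₁ ∏ₙ cₙ^{((-1)^n/2)(dim Cₙ - dim Hₙ)}`. -/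
theorem stmt17 (C C' : ℕ → Type)
    [∀ n, NormedAddCommGroup (C n)] [∀ n, InnerProductSpace ℝ (C n)]
    [∀ n, FiniteDimensional ℝ (C n)]
    [∀ n, NormedAddCommGroup (C' n)] [∀ n, InnerProductSpace ℝ (C' n)]
    [∀ n, FiniteDimensional ℝ (C' n)]
    (d : ∀ n, C n →ₗ[ℝ] C (n - 1)) (hd0 : d 0 = 0)
    (hd : ∀ n, (d n).comp (d (n + 1)) = 0)
    (d' : ∀ n, C' n →ₗ[ℝ] C' (n - 1)) (hd0' : d' 0 = 0)
    (hd' : ∀ n, (d' n).comp (d' (n + 1)) = 0)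
    (N : ℕ) (hvan : ∀ n, N < n → Subsingleton (C n))
    (hvan' : ∀ n, N < n → Subsingleton (C' n))
    (φ : ∀ n, C n ≃ₗ[ℝ] C' n)
    (hchain : ∀ n, (d' n).comp (φ n).toLinearMap
      = ((φ (n - 1)).toLinearMap).comp (d n))
    (c : ℕ → ℝ) (hc : ∀ n, 0 < c n)
    (hinner : ∀ n, ∀ u w : C n, ⟪φ n u, φ n w⟫ = c n * ⟪u, w⟫) :
    torsion C' d' N
      = torsion C d N * ∏ n ∈ Finset.range (N + 1),
          c n ^ (((-1 : ℝ) ^ n / 2) *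
            ((finrank ℝ (C n) : ℝ) -
              (finrank ℝ (↥(LinearMap.ker (d n)) ⧸
                (Submodule.comap (LinearMap.ker (d n)).subtype
                  (LinearMap.range (d (n + 1))))) : ℝ))) := by
  classical
  have hcne : ∀ n, c n ≠ 0 := fun n => (hc n).ne'
  have hd'eq : ∀ n, d' n
      = (φ (n-1)).toLinearMap ∘ₗ d n ∘ₗ (φ n).symm.toLinearMap := by
    intro n
    apply LinearMap.ext; intro x
    have h1 := congrArg (fun h : C n →ₗ[ℝ] C' (n-1) => h ((φ n).symm x)) (hchain n)
    simpa using h1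
  have hadj0 : ∀ n, LinearMap.adjoint (d' n)
      = (c (n-1) / c n) • ((φ n).toLinearMap ∘ₗ LinearMap.adjoint (d n)
          ∘ₗ (φ (n-1)).symm.toLinearMap) := by
    intro n
    rw [hd'eq n]
    exact adjoint_conj (d n) (φ n) (φ (n-1)) (hcne n) (hinner n) (hinner (n-1))
  -- the ranks, with default elaboration
  have key : ∀ n, detPos (hodgeLaplace C' d' n)
      = (c (n-1) / c n) ^ (finrank ℝ (LinearMap.range (d n)))
        * ((c n / c (n+1)) ^ (finrank ℝ (LinearMap.range (d (n+1))))
        * detPos (hodgeLaplace C d n)) := by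
    intro n
    have hγ : 0 < c (n-1) / c n := div_pos (hc _) (hc _)
    have hδ : 0 < c n / c (n+1) := div_pos (hc _) (hc _)
    have hA' : LinearMap.adjoint (d' n) ∘ₗ d' n
        = (φ n).toLinearMap ∘ₗ ((c (n-1) / c n) • (LinearMap.adjoint (d n) ∘ₗ d n))
            ∘ₗ (φ n).symm.toLinearMap := by
      rw [hadj0 n, hd'eq n]
      apply LinearMap.ext; intro x
      simp
    have hB' : (show C' n →ₗ[ℝ] C' n from d' (n+1) ∘ₗ LinearMap.adjoint (d' (n+1)))
        = (φ n).toLinearMap ∘ₗ ((c n / c (n+1)) •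
            (show C n →ₗ[ℝ] C n from d (n+1) ∘ₗ LinearMap.adjoint (d (n+1))))
            ∘ₗ (φ n).symm.toLinearMap := by
      have e1 : d' (n+1) = (φ n).toLinearMap ∘ₗ d (n+1) ∘ₗ (φ (n+1)).symm.toLinearMap :=
        hd'eq (n+1)
      have e2 : LinearMap.adjoint (d' (n+1))
          = (c n / c (n+1)) • ((φ (n+1)).toLinearMap ∘ₗ LinearMap.adjoint (d (n+1))
              ∘ₗ (φ n).symm.toLinearMap) := hadj0 (n+1)
      apply LinearMap.ext; intro x
      show d' (n+1) (LinearMap.adjoint (d' (n+1)) x) = _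
      rw [e2, e1]
      simp
    have hLC' : hodgeLaplace C' d' n = LinearMap.adjoint (d' n) ∘ₗ d' n
        + (show C' n →ₗ[ℝ] C' n from d' (n+1) ∘ₗ LinearMap.adjoint (d' (n+1))) := rfl
    have hconj : hodgeLaplace C' d' n
        = (φ n).toLinearMap ∘ₗ
            ((c (n-1) / c n) • (LinearMap.adjoint (d n) ∘ₗ d n)
              + (c n / c (n+1)) •
                (show C n →ₗ[ℝ] C n from d (n+1) ∘ₗ LinearMap.adjoint (d (n+1))))
            ∘ₗ (φ n).symm.toLinearMap := by
      rw [hLC', hA', hB']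
      apply LinearMap.ext; intro x
      simp
    have hbridge : finrank ℝ (LinearMap.range
          (show C (n+1) →ₗ[ℝ] C n from d (n+1)))
        = finrank ℝ (LinearMap.range (d (n+1))) := rfl
    calc detPos (hodgeLaplace C' d' n)
        = detPos ((c (n-1) / c n) • (LinearMap.adjoint (d n) ∘ₗ d n)
            + (c n / c (n+1)) •
              (show C n →ₗ[ℝ] C n from d (n+1) ∘ₗ LinearMap.adjoint (d (n+1)))) := by
          rw [hconj]
          exact detPos_conj (φ n) (hcne n) (hinner n) _
      _ = detPos ((c (n-1) / c n) • (LinearMap.adjoint (d n) ∘ₗ d n))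
            * detPos ((c n / c (n+1)) •
              (show C n →ₗ[ℝ] C n from d (n+1) ∘ₗ LinearMap.adjoint (d (n+1)))) := by
          rw [smul_adjoint_comp_self (d n) hγ.le,
            smul_comp_adjoint_self (show C (n+1) →ₗ[ℝ] C n from d (n+1)) hδ.le]
          exact detPos_split _ _ (by
            rw [LinearMap.comp_smul, LinearMap.smul_comp]
            rw [show (d n) ∘ₗ (show C (n+1) →ₗ[ℝ] C n from d (n+1)) = 0 from hd n]
            simp)
      _ = ((c (n-1) / c n) ^ (finrank ℝ (LinearMap.range (d n)))
            * detPos (LinearMap.adjoint (d n) ∘ₗ d n))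
          * ((c n / c (n+1)) ^ (finrank ℝ (LinearMap.range
              (show C (n+1) →ₗ[ℝ] C n from d (n+1))))
            * detPos ((show C (n+1) →ₗ[ℝ] C n from d (n+1))
                ∘ₗ LinearMap.adjoint (show C (n+1) →ₗ[ℝ] C n from d (n+1)))) := by
          rw [detPos_smul (isSymmetric_adjoint_comp (d n)) hγ.ne',
            detPos_smul (isSymmetric_comp_adjoint
              (show C (n+1) →ₗ[ℝ] C n from d (n+1))) hδ.ne',
            finrank_range_adjoint_comp, finrank_range_comp_adjoint]
      _ = (c (n-1) / c n) ^ (finrank ℝ (LinearMap.range (d n)))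
          * ((c n / c (n+1)) ^ (finrank ℝ (LinearMap.range (d (n+1))))
          * detPos (hodgeLaplace C d n)) := by
          rw [hbridge,
            show detPos (hodgeLaplace C d n)
                = detPos (LinearMap.adjoint (d n) ∘ₗ d n)
                  * detPos ((show C (n+1) →ₗ[ℝ] C n from d (n+1))
                      ∘ₗ LinearMap.adjoint (show C (n+1) →ₗ[ℝ] C n from d (n+1)))
              from detPos_split (d n) (show C (n+1) →ₗ[ℝ] C n from d (n+1)) (hd n)]
          ring
  have hDpos : ∀ n, 0 < detPos (hodgeLaplace C d n) := fun n =>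
    detPos_hodge_pos (d n) (show C (n+1) →ₗ[ℝ] C n from d (n+1))
  have hD'pos : ∀ n, 0 < detPos (hodgeLaplace C' d' n) := fun n =>
    detPos_hodge_pos (d' n) (show C' (n+1) →ₗ[ℝ] C' n from d' (n+1))
  have hrk0 : finrank ℝ (LinearMap.range (d 0)) = 0 := by
    rw [hd0, LinearMap.range_zero, finrank_bot]
  have hdN1 : d (N+1) = 0 := by
    have := hvan (N+1) (lt_add_one N)
    apply LinearMap.ext; intro x
    rw [Subsingleton.elim x 0]
    simp
  have hrkN : finrank ℝ (LinearMap.range (d (N+1))) = 0 := by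
    rw [hdN1, LinearMap.range_zero, finrank_bot]
  have hdim : ∀ n, (finrank ℝ (C n) : ℝ)
        - (finrank ℝ (↥(LinearMap.ker (d n)) ⧸
            (Submodule.comap (LinearMap.ker (d n)).subtype
              (LinearMap.range (d (n + 1))))) : ℝ)
      = (finrank ℝ (LinearMap.range (d n)) : ℝ)
        + (finrank ℝ (LinearMap.range (d (n+1))) : ℝ) := by
    intro n
    have hle : LinearMap.range (show C (n+1) →ₗ[ℝ] C n from d (n+1))
        ≤ LinearMap.ker (d n) := by
      rintro _ ⟨y, rfl⟩
      have := congrArg (fun h : C (n+1) →ₗ[ℝ] C (n-1) => h y) (hd n)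
      simpa [LinearMap.mem_ker] using this
    have h1 := LinearMap.finrank_range_add_finrank_ker (d n)
    have h2 := Submodule.finrank_quotient_add_finrank (R := ℝ)
        (Submodule.comap (LinearMap.ker (d n)).subtype
          (LinearMap.range (show C (n+1) →ₗ[ℝ] C n from d (n+1))))
    have h3 : finrank ℝ (Submodule.comap (LinearMap.ker (d n)).subtype
          (LinearMap.range (show C (n+1) →ₗ[ℝ] C n from d (n+1))))
        = finrank ℝ (LinearMap.range (show C (n+1) →ₗ[ℝ] C n from d (n+1))) :=
      (Submodule.comapSubtypeEquivOfLe hle).finrank_eq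
    rw [h3] at h2
    have hbridge : finrank ℝ (LinearMap.range
          (show C (n+1) →ₗ[ℝ] C n from d (n+1)))
        = finrank ℝ (LinearMap.range (d (n+1))) := rfl
    rw [hbridge] at h2
    have q1 : (finrank ℝ (C n) : ℝ) = (finrank ℝ (LinearMap.range (d n)) : ℝ)
        + (finrank ℝ (LinearMap.ker (d n)) : ℝ) := by exact_mod_cast h1.symm
    have q2 : (finrank ℝ (↥(LinearMap.ker (d n)) ⧸
          (Submodule.comap (LinearMap.ker (d n)).subtype
            (LinearMap.range (d (n + 1))))) : ℝ)
        + (finrank ℝ (LinearMap.range (d (n+1))) : ℝ)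
        = (finrank ℝ (LinearMap.ker (d n)) : ℝ) := by exact_mod_cast h2
    linarith
  -- logs
  have hkeylog : ∀ n, Real.log (detPos (hodgeLaplace C' d' n))
      = ((finrank ℝ (LinearMap.range (d n)) : ℝ)
            * (Real.log (c (n-1)) - Real.log (c n))
          + (finrank ℝ (LinearMap.range (d (n+1))) : ℝ)
            * (Real.log (c n) - Real.log (c (n+1))))
        + Real.log (detPos (hodgeLaplace C d n)) := by
    intro n
    have hγ : 0 < c (n-1) / c n := div_pos (hc _) (hc _)
    have hδ : 0 < c n / c (n+1) := div_pos (hc _) (hc _)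
    rw [key n, Real.log_mul (pow_ne_zero _ hγ.ne')
        (mul_ne_zero (pow_ne_zero _ hδ.ne') (hDpos n).ne'),
      Real.log_mul (pow_ne_zero _ hδ.ne') (hDpos n).ne',
      Real.log_pow, Real.log_pow, Real.log_div (hcne _) (hcne _),
      Real.log_div (hcne _) (hcne _)]
    ring
  have htor' : torsion C' d' N = ∏ n ∈ Finset.range (N + 1),
      detPos (hodgeLaplace C' d' n) ^ (((-1 : ℝ) ^ (n + 1) * n) / 2) := rfl
  have htor : torsion C d N = ∏ n ∈ Finset.range (N + 1),
      detPos (hodgeLaplace C d n) ^ (((-1 : ℝ) ^ (n + 1) * n) / 2) := rfl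
  have hP1 : 0 < torsion C' d' N := by
    rw [htor']
    exact Finset.prod_pos fun n _ => Real.rpow_pos_of_pos (hD'pos n) _
  have hPc : 0 < ∏ n ∈ Finset.range (N + 1),
      c n ^ (((-1 : ℝ) ^ n / 2) *
        ((finrank ℝ (C n) : ℝ) -
          (finrank ℝ (↥(LinearMap.ker (d n)) ⧸
            (Submodule.comap (LinearMap.ker (d n)).subtype
              (LinearMap.range (d (n + 1))))) : ℝ))) :=
    Finset.prod_pos fun n _ => Real.rpow_pos_of_pos (hc n) _
  have hPt : 0 < torsion C d N := by
    rw [htor]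
    exact Finset.prod_pos fun n _ => Real.rpow_pos_of_pos (hDpos n) _
  have hlog1 : Real.log (torsion C' d' N) = ∑ n ∈ Finset.range (N + 1),
      (((-1 : ℝ) ^ (n + 1) * n) / 2) * Real.log (detPos (hodgeLaplace C' d' n)) := by
    rw [htor', Real.log_prod
      (fun n _ => (Real.rpow_pos_of_pos (hD'pos n) _).ne')]
    exact Finset.sum_congr rfl fun n _ => Real.log_rpow (hD'pos n) _
  have hlog2 : Real.log (torsion C d N) = ∑ n ∈ Finset.range (N + 1),
      (((-1 : ℝ) ^ (n + 1) * n) / 2) * Real.log (detPos (hodgeLaplace C d n)) := by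
    rw [htor, Real.log_prod
      (fun n _ => (Real.rpow_pos_of_pos (hDpos n) _).ne')]
    exact Finset.sum_congr rfl fun n _ => Real.log_rpow (hDpos n) _
  have hlog3 : Real.log (∏ n ∈ Finset.range (N + 1),
      c n ^ (((-1 : ℝ) ^ n / 2) *
        ((finrank ℝ (C n) : ℝ) -
          (finrank ℝ (↥(LinearMap.ker (d n)) ⧸
            (Submodule.comap (LinearMap.ker (d n)).subtype
              (LinearMap.range (d (n + 1))))) : ℝ))))
      = ∑ n ∈ Finset.range (N + 1),
          ((-1 : ℝ) ^ n / 2 * ((finrank ℝ (LinearMap.range (d n)) : ℝ)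
            + (finrank ℝ (LinearMap.range (d (n+1))) : ℝ))) * Real.log (c n) := by
    rw [Real.log_prod (fun n _ => (Real.rpow_pos_of_pos (hc n) _).ne')]
    refine Finset.sum_congr rfl fun n _ => ?_
    rw [Real.log_rpow (hc n), hdim n]
  have hmain : Real.log (torsion C' d' N)
      = Real.log (torsion C d N * ∏ n ∈ Finset.range (N + 1),
          c n ^ (((-1 : ℝ) ^ n / 2) *
            ((finrank ℝ (C n) : ℝ) -
              (finrank ℝ (↥(LinearMap.ker (d n)) ⧸
                (Submodule.comap (LinearMap.ker (d n)).subtype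
                  (LinearMap.range (d (n + 1))))) : ℝ)))) := by
    rw [Real.log_mul hPt.ne' hPc.ne', hlog1, hlog2, hlog3]
    have hsplit : ∀ n ∈ Finset.range (N + 1),
        (((-1 : ℝ) ^ (n + 1) * n) / 2) * Real.log (detPos (hodgeLaplace C' d' n))
          = ((-1 : ℝ) ^ (n + 1) * n / 2) *
              ((fun k => (finrank ℝ (LinearMap.range (d k)) : ℝ)) n
                  * ((fun k => Real.log (c k)) (n-1) - (fun k => Real.log (c k)) n)
                + (fun k => (finrank ℝ (LinearMap.range (d k)) : ℝ)) (n+1)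
                  * ((fun k => Real.log (c k)) n - (fun k => Real.log (c k)) (n+1)))
            + (((-1 : ℝ) ^ (n + 1) * n) / 2) * Real.log (detPos (hodgeLaplace C d n)) := by
      intro n _
      rw [hkeylog n]
      ring
    rw [Finset.sum_congr rfl hsplit, Finset.sum_add_distrib,
      sum_telescope (fun k => (finrank ℝ (LinearMap.range (d k)) : ℝ))
        (fun k => Real.log (c k)) (by simp [hrk0]) N]
    simp only [hrkN, Nat.cast_zero, zero_mul, sub_zero]
    ring
  calc torsion C' d' N = Real.exp (Real.log (torsion C' d' N)) :=
        (Real.exp_log hP1).symm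
    _ = Real.exp (Real.log (torsion C d N * ∏ n ∈ Finset.range (N + 1),
          c n ^ (((-1 : ℝ) ^ n / 2) *
            ((finrank ℝ (C n) : ℝ) -
              (finrank ℝ (↥(LinearMap.ker (d n)) ⧸
                (Submodule.comap (LinearMap.ker (d n)).subtype
                  (LinearMap.range (d (n + 1))))) : ℝ))))) := by rw [hmain]
    _ = _ := Real.exp_log (mul_pos hPt hPc)
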